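/- Let z be a standard bivariate normal vector, φ ∈ (0, π), w > 0, and E(φ) the open cone of half-angle φ/2 about the positive z₂-axis. Then P( sup_{u ∈ E(φ)} |u·z|/‖u‖ < w ) = (φ/π)·F₂(w²) + (2/π)·∫_{φ/2}^{π/2} F₂( w² / cos²(θ - φ/2) ) dθ, where F₂ is the cdf of the chi-squared distribution with 2 degrees of freedom. -/

import Mathlib

open MeasureTheory ProbabilityTheory Set Real

/-- Dot product on ℝ². -/
def dot2 (u z : ℝ × ℝ) : ℝ := u.1 * z.1 + u.2 * z.2

/-- Euclidean norm on ℝ². -/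
noncomputable def nrm2 (u : ℝ × ℝ) : ℝ := Real.sqrt (u.1 ^ 2 + u.2 ^ 2)

/-- The open cone of half-angle `φ/2` about the positive `z₂`-axis. -/
noncomputable def coneE (φ : ℝ) : Set (ℝ × ℝ) :=
  {u : ℝ × ℝ | u ≠ 0 ∧ u.2 > nrm2 u * Real.cos (φ / 2)}

/-- The cdf of the chi-squared distribution with 2 degrees of freedom:
`F₂(t) = 1 - e^{-t/2}` for `t ≥ 0`. -/
noncomputable def chi2cdf (t : ℝ) : ℝ := 1 - Real.exp (-(t / 2))

noncomputable def gfun (φ : ℝ) (z : ℝ × ℝ) : ℝ :=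
  nrm2 z * Real.cos (max (Real.arccos (|z.2| / nrm2 z) - φ / 2) 0)

lemma nrm2_pos {z : ℝ × ℝ} (hz : z ≠ 0) : 0 < nrm2 z := by
  have h : z.1 ≠ 0 ∨ z.2 ≠ 0 := by
    by_contra h
    push_neg at h
    exact hz (Prod.ext h.1 h.2)
  have : 0 < z.1 ^ 2 + z.2 ^ 2 := by
    rcases h with h | h
    · nlinarith [sq_nonneg z.2, sq_abs z.1, pow_pos (abs_pos.mpr h) 2]
    · nlinarith [sq_nonneg z.1, sq_abs z.2, pow_pos (abs_pos.mpr h) 2]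
  exact Real.sqrt_pos.mpr this

lemma nrm2_sq (z : ℝ × ℝ) : nrm2 z ^ 2 = z.1 ^ 2 + z.2 ^ 2 :=
  Real.sq_sqrt (by positivity)

lemma sup_eq (φ : ℝ) (hφ : φ ∈ Set.Ioo 0 π) (z : ℝ × ℝ) :
    sSup ((fun u => |dot2 u z| / nrm2 u) '' coneE φ) = gfun φ z := by
  obtain ⟨hφ0, hφπ⟩ := hφ
  have hφ2 : 0 < φ / 2 := by linarith
  have hφ2' : φ / 2 < π / 2 := by linarith
  have hπ := Real.pi_pos
  have hcφ1 : Real.cos (φ / 2) < 1 := by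
    calc Real.cos (φ / 2) < Real.cos 0 :=
          Real.cos_lt_cos_of_nonneg_of_le_pi (le_refl 0) (by linarith) hφ2
    _ = 1 := Real.cos_zero
  have hcφ0 : 0 < Real.cos (φ / 2) :=
    Real.cos_pos_of_mem_Ioo ⟨by linarith, hφ2'⟩
  rcases eq_or_ne z 0 with rfl | hz
  · have himg : (fun u => |dot2 u (0 : ℝ × ℝ)| / nrm2 u) '' coneE φ = {0} := by
      apply Subset.antisymm
      · rintro x ⟨u, hu, rfl⟩
        simp [dot2]
      · rintro x rfl
        refine ⟨((0 : ℝ), (1 : ℝ)), ⟨?_, ?_⟩, ?_⟩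
        · simp [Prod.ext_iff]
        · have : nrm2 ((0 : ℝ), (1 : ℝ)) = 1 := by simp [nrm2]
          rw [this]; simpa using hcφ1
        · simp [dot2]
    rw [himg, csSup_singleton]
    simp [gfun, nrm2]
  · set r := nrm2 z with hrdef
    have hr : 0 < r := nrm2_pos hz
    have hr2 : r ^ 2 = z.1 ^ 2 + z.2 ^ 2 := nrm2_sq z
    set s : ℝ := Real.arcsin ((if 0 ≤ z.2 then z.1 else -z.1) / r) with hsdef
    have hs : |s| ≤ π / 2 := by
      rw [abs_le]
      exact ⟨Real.neg_pi_div_two_le_arcsin _, Real.arcsin_le_pi_div_two _⟩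
    have habs1 : |z.1| ≤ r := by
      rw [← Real.sqrt_sq_eq_abs, hrdef, nrm2]
      exact Real.sqrt_le_sqrt (by nlinarith [sq_nonneg z.2])
    have habs1' := abs_le.mp habs1
    have hsin : Real.sin s = (if 0 ≤ z.2 then z.1 else -z.1) / r := by
      apply Real.sin_arcsin
      · rw [le_div_iff₀ hr]; split_ifs <;> linarith [habs1'.1, habs1'.2]
      · rw [div_le_one hr]; split_ifs <;> linarith [habs1'.1, habs1'.2]
    have hcos : Real.cos s = |z.2| / r := by
      rw [hsdef, Real.cos_arcsin]
      have h1 : 1 - ((if 0 ≤ z.2 then z.1 else -z.1) / r) ^ 2 = z.2 ^ 2 / r ^ 2 := by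
        have h2 : ((if 0 ≤ z.2 then z.1 else -z.1)) ^ 2 = z.1 ^ 2 := by
          split_ifs <;> ring
        field_simp [h2]
        linarith [hr2]
      rw [h1, Real.sqrt_div (sq_nonneg z.2), Real.sqrt_sq_eq_abs,
        Real.sqrt_sq hr.le]
    -- key identity
    have key : ∀ t : ℝ, |Real.sin t * z.1 + Real.cos t * z.2| = r * |Real.cos (t - s)| := by
      intro t
      have hexp : Real.cos (t - s) = Real.cos t * Real.cos s + Real.sin t * Real.sin s :=
        Real.cos_sub t s
      by_cases h2 : 0 ≤ z.2
      · have hsin' : Real.sin s = z.1 / r := by rw [hsin, if_pos h2]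
        have hcos' : Real.cos s = z.2 / r := by rw [hcos, abs_of_nonneg h2]
        have : r * Real.cos (t - s) = Real.sin t * z.1 + Real.cos t * z.2 := by
          rw [hexp, hsin', hcos']; field_simp; ring
        rw [← this, abs_mul, abs_of_pos hr]
      · have hsin' : Real.sin s = -z.1 / r := by rw [hsin, if_neg h2]
        have hcos' : Real.cos s = -z.2 / r := by
          rw [hcos, abs_of_neg (not_le.mp h2)]
        have : r * Real.cos (t - s) = -(Real.sin t * z.1 + Real.cos t * z.2) := by
          rw [hexp, hsin', hcos']; field_simp; ring
        rw [← abs_neg (Real.sin t * z.1 + Real.cos t * z.2), ← this, abs_mul, abs_of_pos hr]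
    -- image equality
    have himg : (fun u => |dot2 u z| / nrm2 u) '' coneE φ
        = (fun t => r * |Real.cos (t - s)|) '' Set.Ioo (-(φ / 2)) (φ / 2) := by
      apply Subset.antisymm
      · rintro x ⟨u, ⟨hu0, hucone⟩, rfl⟩
        set n := nrm2 u with hndef
        have hn : 0 < n := nrm2_pos hu0
        have hn2 : n ^ 2 = u.1 ^ 2 + u.2 ^ 2 := nrm2_sq u
        have hu2pos : 0 < u.2 := lt_trans (by positivity) hucone
        have habsu : |u.1| ≤ n := by
          rw [← Real.sqrt_sq_eq_abs, hndef, nrm2]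
          exact Real.sqrt_le_sqrt (by nlinarith [sq_nonneg u.2])
        have habsu' := abs_le.mp habsu
        set t : ℝ := Real.arcsin (u.1 / n) with htdef
        have hsint : Real.sin t = u.1 / n := by
          apply Real.sin_arcsin
          · rw [le_div_iff₀ hn]; linarith [habsu'.1]
          · rw [div_le_one hn]; linarith [habsu'.2]
        have hcost : Real.cos t = u.2 / n := by
          rw [htdef, Real.cos_arcsin]
          have h1 : 1 - (u.1 / n) ^ 2 = u.2 ^ 2 / n ^ 2 := by
            field_simp
            linarith [hn2]
          rw [h1, Real.sqrt_div (sq_nonneg u.2), Real.sqrt_sq_eq_abs,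
            Real.sqrt_sq hn.le, abs_of_pos hu2pos]
        have htabs : |t| ≤ π / 2 := by
          rw [abs_le]
          exact ⟨Real.neg_pi_div_two_le_arcsin _, Real.arcsin_le_pi_div_two _⟩
        have ht : |t| < φ / 2 := by
          by_contra hcon
          push_neg at hcon
          have h1 : Real.cos t = Real.cos |t| := (Real.cos_abs t).symm
          have h2 : Real.cos |t| ≤ Real.cos (φ / 2) :=
            Real.cos_le_cos_of_nonneg_of_le_pi hφ2.le (by linarith) hcon
          have h3 : Real.cos (φ / 2) < u.2 / n := by
            rw [lt_div_iff₀ hn]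
            calc Real.cos (φ/2) * n = n * Real.cos (φ/2) := by ring
            _ < u.2 := hucone
          rw [← hcost, h1] at h3
          linarith
        refine ⟨t, abs_lt.mp ht, ?_⟩
        show r * |Real.cos (t - s)| = |dot2 u z| / n
        have h1 : |dot2 u z| / n = |dot2 u z / n| := by
          rw [abs_div, abs_of_pos hn]
        have h2 : dot2 u z / n = Real.sin t * z.1 + Real.cos t * z.2 := by
          rw [hsint, hcost, dot2]; field_simp
        rw [h1, h2]
        exact (key t).symm
      · rintro x ⟨t, ht, rfl⟩
        have htabs : |t| < φ / 2 := abs_lt.mpr ht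
        refine ⟨(Real.sin t, Real.cos t), ⟨?_, ?_⟩, ?_⟩
        · intro hcon
          have h1 : Real.sin t = 0 := congrArg Prod.fst hcon
          have h2 : Real.cos t = 0 := congrArg Prod.snd hcon
          have := Real.sin_sq_add_cos_sq t
          rw [h1, h2] at this; norm_num at this
        · have hnu : nrm2 (Real.sin t, Real.cos t) = 1 := by
            simp only [nrm2]
            rw [Real.sin_sq_add_cos_sq, Real.sqrt_one]
          rw [hnu, one_mul]
          calc Real.cos (φ / 2) < Real.cos |t| :=
                Real.cos_lt_cos_of_nonneg_of_le_pi (abs_nonneg t) (by linarith) htabs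
          _ = Real.cos t := Real.cos_abs t
        · have hnu : nrm2 (Real.sin t, Real.cos t) = 1 := by
            simp only [nrm2]
            rw [Real.sin_sq_add_cos_sq, Real.sqrt_one]
          simp only [dot2, hnu, div_one]
          exact key t
    rw [himg]
    -- sup computation
    set c : ℝ := max (|s| - φ / 2) 0 with hcdef
    have hc0 : 0 ≤ c := le_max_right _ _
    have hcπ : c < π / 2 := by
      rw [hcdef, max_lt_iff]
      constructor <;> linarith
    have hcoscpos : 0 < Real.cos c := Real.cos_pos_of_mem_Ioo ⟨by linarith, hcπ⟩
    have ub : ∀ t ∈ Set.Icc (-(φ / 2)) (φ / 2),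
        r * |Real.cos (t - s)| ≤ r * Real.cos c := by
      intro t ht
      have htabs : |t| ≤ φ / 2 := abs_le.mpr ⟨ht.1, ht.2⟩
      have hy1 : |t - s| ≤ φ / 2 + π / 2 := by
        calc |t - s| ≤ |t| + |s| := abs_sub t s
        _ ≤ φ / 2 + π / 2 := by linarith
      have hy2 : |s| - φ / 2 ≤ |t - s| := by
        have := abs_sub_abs_le_abs_sub s t
        rw [abs_sub_comm s t] at this
        linarith
      apply mul_le_mul_of_nonneg_left _ hr.le
      rcases le_or_gt |t - s| (π / 2) with hle | hgt
      · have h1 : |Real.cos (t - s)| = Real.cos |t - s| := by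
          rw [← Real.cos_abs]
          exact abs_of_nonneg (Real.cos_nonneg_of_mem_Icc
            ⟨by linarith [abs_nonneg (t - s)], hle⟩)
        rw [h1]
        apply Real.cos_le_cos_of_nonneg_of_le_pi hc0 (by linarith [abs_nonneg (t-s)])
        exact max_le hy2 (abs_nonneg _)
      · have habspi : |t - s| < π := by linarith
        have h1 : |Real.cos (t - s)| = Real.cos (π - |t - s|) := by
          rw [← Real.cos_abs]
          have hneg : Real.cos |t - s| < 0 :=
            Real.cos_neg_of_pi_div_two_lt_of_lt hgt (by linarith)
          rw [abs_of_neg hneg, Real.cos_pi_sub]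
        rw [h1]
        apply Real.cos_le_cos_of_nonneg_of_le_pi hc0 (by linarith)
        rw [hcdef, max_le_iff]
        constructor <;> linarith
    have hmem : r * Real.cos c ∈
        (fun t => r * |Real.cos (t - s)|) '' Set.Icc (-(φ / 2)) (φ / 2) := by
      rcases le_or_gt |s| (φ / 2) with hle | hgt
      · have hc : c = 0 := by rw [hcdef, max_eq_right]; linarith
        refine ⟨s, abs_le.mp hle, ?_⟩
        show r * |Real.cos (s - s)| = r * Real.cos c
        rw [hc, sub_self, Real.cos_zero, abs_one]
      · have hc : c = |s| - φ / 2 := by rw [hcdef, max_eq_left]; linarith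
        by_cases hspos : 0 ≤ s
        · refine ⟨φ / 2, ⟨by linarith, le_refl _⟩, ?_⟩
          show r * |Real.cos (φ / 2 - s)| = r * Real.cos c
          have habs_s : |s| = s := abs_of_nonneg hspos
          have heq : φ / 2 - s = -c := by rw [hc, habs_s]; ring
          rw [heq, Real.cos_neg, abs_of_nonneg hcoscpos.le]
        · refine ⟨-(φ / 2), ⟨le_refl _, by linarith⟩, ?_⟩
          show r * |Real.cos (-(φ / 2) - s)| = r * Real.cos c
          have habs_s : |s| = -s := abs_of_neg (not_le.mp hspos)
          have heq : -(φ / 2) - s = c := by rw [hc, habs_s]; ring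
          rw [heq, abs_of_nonneg hcoscpos.le]
    -- conclude csSup
    have hfin : sSup ((fun t => r * |Real.cos (t - s)|) '' Set.Ioo (-(φ / 2)) (φ / 2))
        = r * Real.cos c := by
      set S := (fun t => r * |Real.cos (t - s)|) '' Set.Ioo (-(φ / 2)) (φ / 2) with hSdef
      set B := (fun t => r * |Real.cos (t - s)|) '' Set.Icc (-(φ / 2)) (φ / 2) with hBdef
      have hSB : S ⊆ B := Set.image_mono Set.Ioo_subset_Icc_self
      have hcont : Continuous (fun t : ℝ => r * |Real.cos (t - s)|) :=
        continuous_const.mul ((Real.continuous_cos.comp (continuous_id.sub continuous_const)).abs)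
      have hBclosure : B ⊆ closure S := by
        rw [hBdef, ← closure_Ioo (by linarith : -(φ/2) ≠ φ/2)]
        exact image_closure_subset_closure_image hcont
      have hSne : S.Nonempty := ⟨_, ⟨0, ⟨by linarith, hφ2⟩, rfl⟩⟩
      have hBddB : BddAbove B := ⟨r * Real.cos c, fun x ⟨t, ht, hx⟩ => hx ▸ ub t ht⟩
      have hBddS : BddAbove S := hBddB.mono hSB
      apply le_antisymm
      · apply csSup_le hSne
        rintro x ⟨t, ht, rfl⟩
        exact ub t (Set.Ioo_subset_Icc_self ht)
      · have hub : sSup S ∈ upperBounds S := fun x hx => le_csSup hBddS hx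
        rw [← upperBounds_closure] at hub
        exact hub (hBclosure hmem)
    rw [hfin]
    -- identify with gfun
    have harc : Real.arccos (|z.2| / r) = |s| := by
      rw [← hcos, ← Real.cos_abs]
      exact Real.arccos_cos (abs_nonneg s) (by linarith)
    rw [gfun, ← hrdef, harc]

noncomputable def Gf (φ θ : ℝ) : ℝ := Real.cos (max (Real.arccos |Real.sin θ| - φ / 2) 0)

lemma Gf_cont (φ : ℝ) : Continuous (Gf φ) :=
  Real.continuous_cos.comp
    (((Real.continuous_arccos.comp Real.continuous_sin.abs).sub continuous_const).max
      continuous_const)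

lemma Gf_pos (φ : ℝ) (hφ : φ ∈ Set.Ioo 0 π) (θ : ℝ) : 0 < Gf φ θ := by
  have hπ := Real.pi_pos
  have h1 : Real.arccos |Real.sin θ| ≤ π / 2 := by
    rw [Real.arccos_le_pi_div_two]
    exact abs_nonneg _
  apply Real.cos_pos_of_mem_Ioo
  constructor
  · have := le_max_right (Real.arccos |Real.sin θ| - φ / 2) 0
    linarith
  · rw [max_lt_iff]
    exact ⟨by linarith [hφ.1], by linarith [hφ.1]⟩

lemma nrm2_polar {r : ℝ} (θ : ℝ) (hr : 0 < r) :
    nrm2 (r * Real.cos θ, r * Real.sin θ) = r := by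
  have hpy : (r * Real.cos θ) ^ 2 + (r * Real.sin θ) ^ 2 = r ^ 2 := by
    have := Real.sin_sq_add_cos_sq θ; nlinarith
  rw [nrm2]
  show Real.sqrt ((r * Real.cos θ) ^ 2 + (r * Real.sin θ) ^ 2) = r
  rw [hpy, Real.sqrt_sq hr.le]

lemma gfun_polar (φ : ℝ) {r : ℝ} (θ : ℝ) (hr : 0 < r) :
    gfun φ (r * Real.cos θ, r * Real.sin θ) = r * Gf φ θ := by
  rw [gfun, nrm2_polar θ hr, Gf]
  have habs : |r * Real.sin θ| / r = |Real.sin θ| := by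
    rw [abs_mul, abs_of_pos hr, mul_comm, mul_div_assoc, div_self hr.ne', mul_one]
  show r * Real.cos (max (Real.arccos (|r * Real.sin θ| / r) - φ / 2) 0) = _
  rw [habs]

lemma continuous_nrm2 : Continuous nrm2 := by
  have h : Continuous fun z : ℝ × ℝ => z.1 ^ 2 + z.2 ^ 2 := by fun_prop
  exact Real.continuous_sqrt.comp h

lemma measurable_gfun (φ : ℝ) : Measurable (gfun φ) := by
  have h1 : Measurable nrm2 := continuous_nrm2.measurable
  have h2 : Measurable fun z : ℝ × ℝ => |z.2| / nrm2 z := (measurable_snd.abs).div h1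
  have h3 : Measurable fun z : ℝ × ℝ => Real.arccos (|z.2| / nrm2 z) :=
    Real.continuous_arccos.measurable.comp h2
  exact h1.mul (Real.continuous_cos.measurable.comp
    ((h3.sub measurable_const).max measurable_const))

lemma psi1_integrable : IntegrableOn (fun x : ℝ => x * Real.exp (-(x ^ 2) / 2)) (Set.Ioi 0) := by
  have h := integrableOn_rpow_mul_exp_neg_mul_sq (by norm_num : (0:ℝ) < 1/2)
    (by norm_num : (-1:ℝ) < 1)
  have heq : (fun x : ℝ => x ^ (1:ℝ) * Real.exp (-(1/2) * x ^ 2))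
      = fun x : ℝ => x * Real.exp (-(x ^ 2) / 2) := by
    funext x
    rw [Real.rpow_one]
    congr 1
    ring
  rwa [heq] at h

lemma inner_int (φ w : ℝ) (hφ : φ ∈ Set.Ioo 0 π) (hw : 0 < w) (θ : ℝ) :
    (∫ r in Set.Ioi (0:ℝ), Set.indicator {q : ℝ × ℝ | q.1 * Gf φ q.2 < w}
      (fun q => q.1 * ((2 * π)⁻¹ * Real.exp (-(q.1 ^ 2) / 2))) (r, θ))
    = (2 * π)⁻¹ * chi2cdf (w ^ 2 / Gf φ θ ^ 2) := by
  have hG := Gf_pos φ hφ θ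
  set b := w / Gf φ θ with hb
  have hbpos : 0 < b := div_pos hw hG
  have h1 : ∀ r : ℝ, Set.indicator {q : ℝ × ℝ | q.1 * Gf φ q.2 < w}
      (fun q => q.1 * ((2 * π)⁻¹ * Real.exp (-(q.1 ^ 2) / 2))) (r, θ)
      = Set.indicator (Set.Iio b) (fun r => r * ((2 * π)⁻¹ * Real.exp (-(r ^ 2) / 2))) r := by
    intro r
    simp only [Set.indicator_apply, Set.mem_setOf_eq, Set.mem_Iio, hb, lt_div_iff₀ hG]
  simp_rw [h1]
  rw [setIntegral_indicator measurableSet_Iio, Set.Ioi_inter_Iio,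
    ← integral_Ioc_eq_integral_Ioo, ← intervalIntegral.integral_of_le hbpos.le]
  have hderiv : ∀ x ∈ Set.uIcc (0:ℝ) b, HasDerivAt (fun x => -(2 * π)⁻¹ * Real.exp (-(x ^ 2) / 2))
      (x * ((2 * π)⁻¹ * Real.exp (-(x ^ 2) / 2))) x := by
    intro x _
    have h1 : HasDerivAt (fun y : ℝ => -(y ^ 2) / 2) (-x) x := by
      have h := (hasDerivAt_pow 2 x).neg.div_const 2
      refine h.congr_deriv ?_
      push_cast
      ring
    have h2 := (h1.exp).const_mul (-(2 * π)⁻¹)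
    refine h2.congr_deriv ?_
    ring
  have hcontInt : IntervalIntegrable (fun x : ℝ => x * ((2 * π)⁻¹ * Real.exp (-(x ^ 2) / 2)))
      volume 0 b := by
    apply Continuous.intervalIntegrable
    exact continuous_id.mul (continuous_const.mul
      (Real.continuous_exp.comp (((continuous_pow 2).neg).div_const 2)))
  rw [intervalIntegral.integral_eq_sub_of_hasDerivAt hderiv hcontInt]
  have hb2 : b ^ 2 = w ^ 2 / Gf φ θ ^ 2 := div_pow w (Gf φ θ) 2
  rw [chi2cdf, ← hb2]
  rw [show -((0:ℝ) ^ 2) / 2 = 0 by norm_num, Real.exp_zero]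
  have : -(b ^ 2) / 2 = -(b ^ 2 / 2) := by ring
  rw [this]
  ring

lemma outer_int (φ w : ℝ) (hφ : φ ∈ Set.Ioo 0 π) (hw : 0 < w) :
    (∫ θ in Set.Ioo (-π) π, chi2cdf (w ^ 2 / Gf φ θ ^ 2))
      = 4 * ((φ / 2) * chi2cdf (w ^ 2)
          + ∫ θ in (φ / 2)..(π / 2), chi2cdf (w ^ 2 / Real.cos (θ - φ / 2) ^ 2)) := by
  have hπ := Real.pi_pos
  obtain ⟨hφ0, hφπ⟩ := hφ
  set H : ℝ → ℝ := fun θ => chi2cdf (w ^ 2 / Gf φ θ ^ 2) with hH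
  have hGpos : ∀ θ, 0 < Gf φ θ := Gf_pos φ ⟨hφ0, hφπ⟩
  have hHcont : Continuous H := by
    have h2 : Continuous fun θ => w ^ 2 / Gf φ θ ^ 2 :=
      continuous_const.div ((Gf_cont φ).pow 2) (fun θ => pow_ne_zero 2 (hGpos θ).ne')
    exact continuous_const.sub (Real.continuous_exp.comp ((h2.div_const 2).neg))
  have hii : ∀ a b : ℝ, IntervalIntegrable H volume a b :=
    fun a b => hHcont.intervalIntegrable a b
  have heven : ∀ θ, H (-θ) = H θ := by
    intro θ; simp only [hH, Gf, Real.sin_neg, abs_neg]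
  have hreflpt : ∀ θ, H (π - θ) = H θ := by
    intro θ; simp only [hH, Gf, Real.sin_pi_sub]
  have hIoo : ∫ θ in Set.Ioo (-π) π, H θ = ∫ θ in (-π)..π, H θ := by
    rw [intervalIntegral.integral_of_le (by linarith), integral_Ioc_eq_integral_Ioo]
  have hsplit1 : ∫ θ in (-π)..π, H θ = (∫ θ in (-π)..0, H θ) + ∫ θ in (0:ℝ)..π, H θ :=
    (intervalIntegral.integral_add_adjacent_intervals (hii _ _) (hii _ _)).symm
  have hneg : ∫ θ in (-π)..(0:ℝ), H θ = ∫ θ in (0:ℝ)..π, H θ := by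
    have h := intervalIntegral.integral_comp_neg (a := 0) (b := π) H
    rw [intervalIntegral.integral_congr (g := H) (fun x _ => heven x),
      show (-0:ℝ) = 0 by norm_num] at h
    exact h.symm
  have hsplit2 : ∫ θ in (0:ℝ)..π, H θ = (∫ θ in (0:ℝ)..(π/2), H θ) + ∫ θ in (π/2)..π, H θ :=
    (intervalIntegral.integral_add_adjacent_intervals (hii _ _) (hii _ _)).symm
  have hrefl : ∫ θ in (π/2)..π, H θ = ∫ θ in (0:ℝ)..(π/2), H θ := by
    have h := intervalIntegral.integral_comp_sub_left (a := 0) (b := π/2) H π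
    rw [intervalIntegral.integral_congr (g := H) (fun x _ => hreflpt x),
      show π - π/2 = π/2 by ring, show π - (0:ℝ) = π by ring] at h
    exact h.symm
  have hsplit3 : ∫ θ in (0:ℝ)..(π/2), H θ
      = (∫ θ in (0:ℝ)..(π/2 - φ/2), H θ) + ∫ θ in (π/2 - φ/2)..(π/2), H θ :=
    (intervalIntegral.integral_add_adjacent_intervals (hii _ _) (hii _ _)).symm
  have hGf01 : ∀ θ ∈ Set.Icc (0:ℝ) (π/2),
      H θ = chi2cdf (w ^ 2 / Real.cos (max (π/2 - θ - φ/2) 0) ^ 2) := by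
    intro θ hθ
    have h1 : |Real.sin θ| = Real.sin θ :=
      abs_of_nonneg (Real.sin_nonneg_of_nonneg_of_le_pi hθ.1 (by linarith [hθ.2]))
    have h2 : Real.arccos (Real.sin θ) = π/2 - θ := by
      rw [Real.arccos_eq_pi_div_two_sub_arcsin,
        Real.arcsin_sin (by linarith [hθ.1]) (by linarith [hθ.2])]
    simp only [hH, Gf, h1, h2]
  have hconst : ∫ θ in (π/2 - φ/2)..(π/2), H θ = (φ/2) * chi2cdf (w ^ 2) := by
    rw [intervalIntegral.integral_congr (g := fun _ => chi2cdf (w ^ 2)) ?_,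
      intervalIntegral.integral_const]
    · rw [smul_eq_mul, show π/2 - (π/2 - φ/2) = φ/2 by ring]
    · intro θ hθ
      rw [Set.uIcc_of_le (by linarith)] at hθ
      have hmax : max (π/2 - θ - φ/2) 0 = 0 := max_eq_right (by linarith [hθ.1])
      rw [hGf01 θ ⟨by linarith [hθ.1], hθ.2⟩, hmax, Real.cos_zero, one_pow, div_one]
  have hmain : ∫ θ in (0:ℝ)..(π/2 - φ/2), H θ
      = ∫ θ in (φ/2)..(π/2), chi2cdf (w ^ 2 / Real.cos (θ - φ/2) ^ 2) := by
    have h := intervalIntegral.integral_comp_sub_left (a := 0) (b := π/2 - φ/2)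
      (fun x => chi2cdf (w ^ 2 / Real.cos (x - φ/2) ^ 2)) (π/2)
    have e1 : π/2 - (π/2 - φ/2) = φ/2 := by ring
    have e2 : π/2 - (0:ℝ) = π/2 := by ring
    rw [e1, e2] at h
    rw [← h]
    apply intervalIntegral.integral_congr
    intro θ hθ
    rw [Set.uIcc_of_le (by linarith)] at hθ
    have hmax : max (π/2 - θ - φ/2) 0 = π/2 - θ - φ/2 := max_eq_left (by linarith [hθ.2])
    rw [hGf01 θ ⟨hθ.1, by linarith [hθ.2]⟩, hmax]
  rw [hIoo, hsplit1, hneg, hsplit2, hrefl, hsplit3, hconst, hmain]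
  ring

/-- Let `z` be a standard bivariate normal vector, `φ ∈ (0, π)`, `w > 0`, and `E(φ)` the open
cone of half-angle `φ/2` about the positive `z₂`-axis. Then
`P( sup_{u ∈ E(φ)} |u·z|/‖u‖ < w ) = (φ/π)·F₂(w²) +
(2/π)·∫_{φ/2}^{π/2} F₂( w² / cos²(θ - φ/2) ) dθ`. -/
theorem two_sided_coverage_probability
    (φ w : ℝ) (hφ : φ ∈ Set.Ioo 0 π) (hw : 0 < w) :
    (((gaussianReal 0 1).prod (gaussianReal 0 1))
        {z : ℝ × ℝ | sSup ((fun u => |dot2 u z| / nrm2 u) '' coneE φ) < w}).toReal =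
      (φ / π) * chi2cdf (w ^ 2) +
        (2 / π) * ∫ θ in (φ / 2)..(π / 2), chi2cdf (w ^ 2 / Real.cos (θ - φ / 2) ^ 2) := by
  have hπ := Real.pi_pos
  have hset : {z : ℝ × ℝ | sSup ((fun u => |dot2 u z| / nrm2 u) '' coneE φ) < w}
      = {z : ℝ × ℝ | gfun φ z < w} := by
    ext z
    rw [Set.mem_setOf_eq, Set.mem_setOf_eq, sup_eq φ hφ z]
  rw [hset]
  set S := {z : ℝ × ℝ | gfun φ z < w} with hSdef
  have hSmeas : MeasurableSet S := measurableSet_lt (measurable_gfun φ) measurable_const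
  have h1ne : (1 : NNReal) ≠ 0 := one_ne_zero
  have hprod : (gaussianReal 0 1).prod (gaussianReal 0 1)
      = (volume.prod volume).withDensity
          (fun z : ℝ × ℝ => gaussianPDF 0 1 z.1 * gaussianPDF 0 1 z.2) := by
    apply Measure.prod_eq
    intro s t hs ht
    rw [withDensity_apply _ (hs.prod ht), ← Measure.prod_restrict,
      lintegral_prod_mul (measurable_gaussianPDF 0 1).aemeasurable
        (measurable_gaussianPDF 0 1).aemeasurable,
      gaussianReal_apply 0 h1ne s, gaussianReal_apply 0 h1ne t]
  rw [hprod, withDensity_apply _ hSmeas]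
  set fR : ℝ × ℝ → ℝ := fun z => gaussianPDFReal 0 1 z.1 * gaussianPDFReal 0 1 z.2 with hfRdef
  have hfRnonneg : ∀ z, 0 ≤ fR z := fun z =>
    mul_nonneg (gaussianPDFReal_nonneg _ _ _) (gaussianPDFReal_nonneg _ _ _)
  have hfRint : Integrable fR (volume.prod volume) :=
    (integrable_gaussianPDFReal 0 1).mul_prod (integrable_gaussianPDFReal 0 1)
  have hofReal : ∀ z : ℝ × ℝ,
      gaussianPDF 0 1 z.1 * gaussianPDF 0 1 z.2 = ENNReal.ofReal (fR z) := by
    intro z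
    rw [hfRdef, ENNReal.ofReal_mul (gaussianPDFReal_nonneg _ _ _)]
    rfl
  have hlint : (∫⁻ z in S, gaussianPDF 0 1 z.1 * gaussianPDF 0 1 z.2 ∂(volume.prod volume))
      = ENNReal.ofReal (∫ z in S, fR z ∂(volume.prod volume)) := by
    simp_rw [hofReal]
    exact (ofReal_integral_eq_lintegral_ofReal hfRint.restrict (ae_of_all _ hfRnonneg)).symm
  rw [hlint, ENNReal.toReal_ofReal (setIntegral_nonneg hSmeas (fun z _ => hfRnonneg z))]
  rw [← Measure.volume_eq_prod ℝ ℝ, ← integral_indicator hSmeas,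
    ← integral_comp_polarCoord_symm (S.indicator fR)]
  have htarget : polarCoord.target = Set.Ioi (0:ℝ) ×ˢ Set.Ioo (-π) π := rfl
  have hGcont := Gf_cont φ
  have hpt : ∀ p ∈ polarCoord.target, p.1 • (S.indicator fR) (polarCoord.symm p)
      = Set.indicator {q : ℝ × ℝ | q.1 * Gf φ q.2 < w}
          (fun q => q.1 * ((2 * π)⁻¹ * Real.exp (-(q.1 ^ 2) / 2))) p := by
    rintro ⟨ρ, θ⟩ hp
    rw [htarget] at hp
    have hρ : (0:ℝ) < ρ := hp.1
    have hsymm : polarCoord.symm (ρ, θ) = (ρ * Real.cos θ, ρ * Real.sin θ) := rfl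
    have hpy : (ρ * Real.cos θ) ^ 2 + (ρ * Real.sin θ) ^ 2 = ρ ^ 2 := by
      have := Real.sin_sq_add_cos_sq θ; nlinarith
    have h2π : (0:ℝ) < 2 * π := by positivity
    have hfRp : fR (ρ * Real.cos θ, ρ * Real.sin θ) = (2 * π)⁻¹ * Real.exp (-(ρ ^ 2) / 2) := by
      simp only [hfRdef, gaussianPDFReal, NNReal.coe_one, mul_one, sub_zero]
      rw [mul_mul_mul_comm, ← Real.exp_add, ← mul_inv, Real.mul_self_sqrt h2π.le]
      congr 1
      rw [Real.exp_eq_exp]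
      linarith [hpy]
    rw [hsymm]
    by_cases hmem : (ρ, θ) ∈ {q : ℝ × ℝ | q.1 * Gf φ q.2 < w}
    · have hmemS : (ρ * Real.cos θ, ρ * Real.sin θ) ∈ S := by
        rw [hSdef, Set.mem_setOf_eq, gfun_polar φ θ hρ]
        exact hmem
      rw [Set.indicator_of_mem hmemS, Set.indicator_of_mem hmem, hfRp, smul_eq_mul]
    · have hmemS : (ρ * Real.cos θ, ρ * Real.sin θ) ∉ S := by
        rw [hSdef, Set.mem_setOf_eq, gfun_polar φ θ hρ]
        exact hmem
      rw [Set.indicator_of_notMem hmemS, Set.indicator_of_notMem hmem, smul_zero]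
  rw [setIntegral_congr_fun (htarget ▸ (measurableSet_Ioi.prod measurableSet_Ioo)) hpt,
    htarget, Measure.volume_eq_prod ℝ ℝ, ← Measure.prod_restrict]
  have hfin : IsFiniteMeasure (volume.restrict (Set.Ioo (-π) π)) :=
    ⟨by rw [Measure.restrict_apply_univ]; exact measure_Ioo_lt_top⟩
  have hψcont : Continuous (fun q : ℝ × ℝ => q.1 * ((2 * π)⁻¹ * Real.exp (-(q.1 ^ 2) / 2))) :=
    continuous_fst.mul (continuous_const.mul
      (Real.continuous_exp.comp ((((continuous_pow 2).comp continuous_fst).neg).div_const 2)))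
  have hOopen : IsOpen {q : ℝ × ℝ | q.1 * Gf φ q.2 < w} :=
    isOpen_lt (continuous_fst.mul (hGcont.comp continuous_snd)) continuous_const
  have hψ1 : Integrable (fun x : ℝ => x * ((2 * π)⁻¹ * Real.exp (-(x ^ 2) / 2)))
      (volume.restrict (Set.Ioi 0)) := by
    have h := psi1_integrable.const_mul (2 * π)⁻¹
    have heq : (fun x : ℝ => (2 * π)⁻¹ * (x * Real.exp (-(x ^ 2) / 2)))
        = fun x : ℝ => x * ((2 * π)⁻¹ * Real.exp (-(x ^ 2) / 2)) := by
      funext x; ring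
    rwa [heq] at h
  have hJint : Integrable (Set.indicator {q : ℝ × ℝ | q.1 * Gf φ q.2 < w}
      (fun q => q.1 * ((2 * π)⁻¹ * Real.exp (-(q.1 ^ 2) / 2))))
      ((volume.restrict (Set.Ioi 0)).prod (volume.restrict (Set.Ioo (-π) π))) := by
    have hg : Integrable (fun p : ℝ × ℝ =>
        |p.1 * ((2 * π)⁻¹ * Real.exp (-(p.1 ^ 2) / 2))| * (1:ℝ))
        ((volume.restrict (Set.Ioi 0)).prod (volume.restrict (Set.Ioo (-π) π))) :=
      (hψ1.abs).mul_prod (integrable_const 1)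
    simp only [mul_one] at hg
    refine Integrable.mono' hg ?_ (ae_of_all _ fun p => ?_)
    · exact (hψcont.measurable.indicator hOopen.measurableSet).aestronglyMeasurable
    · exact norm_indicator_le_norm_self _ _
  rw [MeasureTheory.integral_prod_symm _ hJint]
  simp_rw [inner_int φ w hφ hw]
  rw [MeasureTheory.integral_const_mul, outer_int φ w hφ hw]
  have hπ' : π ≠ 0 := Real.pi_ne_zero
  field_simp
  ring
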